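/- For any integer n > 1 and any prime p ≡ 1 (mod q) with q > 0, the p-adic valuation of gcd_{0<k<n} C(qn, qk) equals 1 if α_p(qn) = q, and equals 0 otherwise. -/

import Mathlib

namespace Stmt18

lemma L0 {p : ℕ} (hp : 2 ≤ p) (v : ℕ) :
    (Nat.digits p v).sum = v % p + (Nat.digits p (v / p)).sum := by
  rcases Nat.eq_zero_or_pos v with h | h
  · simp [h]
  · rw [Nat.digits_def' hp h]; simp

lemma Ssingle {p : ℕ} (hp : 2 ≤ p) {d : ℕ} (hd : d < p) :
    (Nat.digits p d).sum = d := by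
  rw [L0 hp, Nat.mod_eq_of_lt hd, Nat.div_eq_of_lt hd]
  simp

lemma L1 {p : ℕ} (hp : 2 ≤ p) (j : ℕ) : ∀ u v : ℕ, v < p ^ j →
    (Nat.digits p (v + p ^ j * u)).sum = (Nat.digits p v).sum + (Nat.digits p u).sum := by
  induction j with
  | zero =>
    intro u v hv
    have h0 : v = 0 := by simp [pow_zero] at hv; omega
    subst h0; simp
  | succ j ih =>
    intro u v hv
    rcases Nat.eq_zero_or_pos u with rfl | hu
    · simp
    have hdiv : (v + p ^ (j + 1) * u) / p = v / p + p ^ j * u := by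
      rw [pow_succ, mul_comm (p ^ j) p, mul_assoc, Nat.add_mul_div_left _ _ (by omega : 0 < p)]
    have hmod : (v + p ^ (j + 1) * u) % p = v % p := by
      conv_lhs => rw [pow_succ, mul_comm (p ^ j) p, mul_assoc, Nat.add_mul_mod_self_left]
    rw [L0 hp (v + p ^ (j + 1) * u), hmod, hdiv,
      ih u (v / p) (Nat.div_lt_of_lt_mul (by rw [mul_comm]; rw [pow_succ] at hv; exact hv)),
      ← add_assoc, ← L0 hp v]

lemma Spos {p : ℕ} (hp : 2 ≤ p) : ∀ m : ℕ, 0 < m → 0 < (Nat.digits p m).sum := by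
  intro m
  induction m using Nat.strong_induction_on with
  | _ m ih =>
    intro hm
    rw [L0 hp]
    rcases Nat.eq_zero_or_pos (m % p) with h | h
    · have hd : p ∣ m := Nat.dvd_of_mod_eq_zero h
      have h1 : 0 < m / p := Nat.div_pos (Nat.le_of_dvd hm hd) (by omega)
      have h2 : m / p < m := Nat.div_lt_self hm hp
      have := ih (m / p) h2 h1
      omega
    · omega

lemma Smul {p : ℕ} (hp : 2 ≤ p) (u : ℕ) :
    (Nat.digits p (p * u)).sum = (Nat.digits p u).sum := by
  rw [L0 hp, Nat.mul_mod_right, Nat.mul_div_cancel_left _ (by omega : 0 < p)]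
  simp

/-- Lemma A: split digit sums without carries. -/
lemma splitA {p : ℕ} (hp : 2 ≤ p) : ∀ m t : ℕ, t ≤ (Nat.digits p m).sum →
    ∃ a, a ≤ m ∧ (Nat.digits p a).sum = t ∧
      (Nat.digits p (m - a)).sum = (Nat.digits p m).sum - t := by
  intro m
  induction m using Nat.strong_induction_on with
  | _ m ih =>
    intro t ht
    rcases Nat.eq_zero_or_pos m with rfl | hm
    · simp at ht; exact ⟨0, by simp [ht]⟩
    rcases le_or_gt t (m % p) with h | h
    · refine ⟨t, le_trans h (Nat.mod_le m p),
        Ssingle hp (lt_of_le_of_lt h (Nat.mod_lt m (by omega))), ?_⟩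
      have key : m - t = (m % p - t) + p * (m / p) := by
        have := Nat.mod_add_div m p
        omega
      have hlt : m % p - t < p := lt_of_le_of_lt (Nat.sub_le _ _) (Nat.mod_lt m (by omega))
      rw [key]
      have h1 := L1 hp 1 (m / p) (m % p - t) (by simpa using hlt)
      rw [pow_one] at h1
      rw [h1, Ssingle hp hlt, L0 hp m]
      omega
    · have hS := L0 hp m
      have ht' : t - m % p ≤ (Nat.digits p (m / p)).sum := by omega
      obtain ⟨a', ha'le, ha'sum, ha'rest⟩ := ih (m / p) (Nat.div_lt_self hm hp) (t - m % p) ht'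
      have hmul : p * a' ≤ p * (m / p) := Nat.mul_le_mul_left p ha'le
      refine ⟨m % p + p * a', ?_, ?_, ?_⟩
      · have := Nat.mod_add_div m p
        omega
      · have h1 := L1 hp 1 a' (m % p) (by simpa using Nat.mod_lt m (show 0 < p by omega))
        rw [pow_one] at h1
        rw [h1, Ssingle hp (Nat.mod_lt m (by omega)), ha'sum]
        omega
      · have key : m - (m % p + p * a') = p * (m / p - a') := by
          have h4 := Nat.mod_add_div m p
          rw [Nat.mul_sub_left_distrib]
          omega
        rw [key, Smul hp, ha'rest]
        omega

/-- Lemma B: split with exactly one carry. -/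
lemma splitB {p : ℕ} (hpp : p.Prime) {m : ℕ} (hm : p ≤ m)
    (hS : (Nat.digits p m).sum ≤ p - 1) :
    ∃ a b, a + b = m ∧ 0 < b ∧ (Nat.digits p a).sum = (Nat.digits p m).sum ∧
      (Nat.digits p b).sum = p - 1 := by
  have hp : 2 ≤ p := hpp.two_le
  set r := m % p with hr
  set x := m / p with hx
  have hx1 : 1 ≤ x := (Nat.one_le_div_iff (by omega)).mpr hm
  have hSx : 0 < (Nat.digits p x).sum := Spos hp x hx1
  have hSm : (Nat.digits p m).sum = r + (Nat.digits p x).sum := L0 hp m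
  have hrp : r ≤ p - 2 := by
    have hrlt : r < p := Nat.mod_lt m (by omega)
    omega
  obtain ⟨i, y, hxy, hpy, hy1⟩ : ∃ i y, p ^ i * y = x ∧ ¬ p ∣ y ∧ 1 ≤ y :=
    ⟨x.factorization p, x / p ^ x.factorization p, Nat.ordProj_mul_ordCompl_eq_self x p,
      Nat.not_dvd_ordCompl hpp (by omega), Nat.ordCompl_pos p (by omega : x ≠ 0)⟩
  set z := y - 1 with hz
  have hyz : y = z + 1 := by omega
  -- digit sum of y - 1
  have hSz : (Nat.digits p z).sum + 1 = (Nat.digits p y).sum := by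
    have hd : 1 ≤ y % p := by
      rcases Nat.eq_zero_or_pos (y % p) with h0 | h0
      · exact absurd (Nat.dvd_of_mod_eq_zero h0) hpy
      · exact h0
    have hzy : z = (y % p - 1) + p * (y / p) := by
      have := Nat.mod_add_div y p
      omega
    have h1 := L1 hp 1 (y / p) (y % p - 1)
      (by simpa using lt_of_le_of_lt (Nat.sub_le _ _) (Nat.mod_lt y (by omega) : y % p < p))
    rw [pow_one] at h1
    rw [hzy, h1, Ssingle hp (by have := Nat.mod_lt y (show 0 < p by omega); omega), L0 hp y]
    omega
  have hpi : 1 ≤ p ^ i := Nat.one_le_pow _ _ (by omega)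
  have hSxy : (Nat.digits p x).sum = (Nat.digits p y).sum := by
    have h1 := L1 hp i y 0 (by omega)
    rw [zero_add] at h1
    rw [← hxy, h1]; simp
  refine ⟨(p ^ i + r) + p ^ (i + 1) * z, (p - 1) * p ^ i, ?_, ?_, ?_, ?_⟩
  · -- a + b = m
    have h1 : (p - 1) * p ^ i + p ^ i = p ^ (i + 1) := by
      have : (p - 1) * p ^ i + p ^ i = (p - 1 + 1) * p ^ i := by ring
      rw [this, (by omega : p - 1 + 1 = p), pow_succ, mul_comm]
    have h2 : p ^ (i + 1) * z + p ^ (i + 1) = p ^ (i + 1) * y := by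
      rw [hyz]; ring
    have h3 : p ^ (i + 1) * y = p * x := by
      rw [pow_succ, mul_comm (p ^ i) p, mul_assoc, hxy]
    have h4 : r + p * x = m := by
      rw [hr, hx]; exact Nat.mod_add_div m p
    omega
  · -- 0 < b
    have : 1 ≤ p - 1 := by omega
    exact Nat.mul_pos (by omega) (by omega)
  · -- digit sum of a
    have hlt : p ^ i + r < p ^ (i + 1) := by
      rcases Nat.eq_zero_or_pos i with rfl | hi1
      · norm_num; omega
      · have h1 : p ≤ p ^ i := le_self_pow (by omega) (by omega)
        have h2 : p ^ i + p ^ i ≤ p ^ (i + 1) := by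
          rw [pow_succ]
          calc p ^ i + p ^ i = p ^ i * 2 := by ring
            _ ≤ p ^ i * p := Nat.mul_le_mul_left _ (by omega)
        omega
    have ha := L1 hp (i + 1) z (p ^ i + r) hlt
    have hSpir : (Nat.digits p (p ^ i + r)).sum = r + 1 := by
      rcases Nat.eq_zero_or_pos i with rfl | hi1
      · rw [pow_zero, Ssingle hp (by omega)]
        omega
      · have hrlt : r < p ^ i := lt_of_lt_of_le (by omega : r < p) (le_self_pow (by omega) (by omega))
        have h1 := L1 hp i 1 r hrlt
        rw [mul_one] at h1
        rw [add_comm (p ^ i) r, h1, Ssingle hp (by omega),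
          Ssingle hp (by omega : 1 < p)]
    rw [ha, hSpir, hSm, hSxy]
    omega
  · -- digit sum of b
    have h1 := L1 hp i (p - 1) 0 (by omega)
    rw [zero_add] at h1
    rw [mul_comm, h1, Ssingle hp (by omega : p - 1 < p)]
    simp

end Stmt18

theorem stmt_18 (n q p : ℕ) (hn : 1 < n) (hq : 0 < q) (hp : p.Prime)
    (hcong : p % q = 1 % q) :
    padicValNat p (Finset.gcd (Finset.Ioo 0 n) (fun k => Nat.choose (q * n) (q * k))) =
      if (Nat.digits p (q * n)).sum = q then 1 else 0 := by
  haveI : Fact p.Prime := ⟨hp⟩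
  have hp2 : 2 ≤ p := hp.two_le
  have hq1 : q ∣ p - 1 := (Nat.modEq_iff_dvd' (by omega : 1 ≤ p)).mp hcong.symm
  have hqp : q ≤ p - 1 := Nat.le_of_dvd (by omega) hq1
  -- digit sums mod q
  have modeq : ∀ m : ℕ, m ≡ (Nat.digits p m).sum [MOD q] := by
    intro m
    rcases eq_or_lt_of_le (by omega : 1 ≤ q) with h1 | h1
    · have hq1' : q = 1 := by omega
      simp [hq1', Nat.ModEq, Nat.mod_one]
    · exact Nat.modEq_digits_sum q p (by rw [hcong, Nat.mod_eq_of_lt h1]) m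
  have keyf : ∀ m : ℕ, q ∣ m → q ∣ (Nat.digits p m).sum := fun m hm =>
    (Nat.modEq_zero_iff_dvd).mp ((modeq m).symm.trans ((Nat.modEq_zero_iff_dvd).mpr hm))
  have keyb : ∀ m : ℕ, q ∣ (Nat.digits p m).sum → q ∣ m := fun m hm =>
    (Nat.modEq_zero_iff_dvd).mp ((modeq m).trans ((Nat.modEq_zero_iff_dvd).mpr hm))
  have hSge : ∀ m : ℕ, 0 < m → q ∣ m → q ≤ (Nat.digits p m).sum := fun m h hd =>
    Nat.le_of_dvd (Stmt18.Spos hp2 m h) (keyf m hd)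
  set G := Finset.gcd (Finset.Ioo 0 n) (fun k => Nat.choose (q * n) (q * k)) with hG
  have h1n : (1 : ℕ) ∈ Finset.Ioo 0 n := by simp [Finset.mem_Ioo]; omega
  have hGdvd : ∀ k ∈ Finset.Ioo 0 n, G ∣ Nat.choose (q * n) (q * k) := fun k hk =>
    Finset.gcd_dvd hk
  have hCpos : ∀ k : ℕ, k ≤ n → 0 < Nat.choose (q * n) (q * k) := fun k hk =>
    Nat.choose_pos (Nat.mul_le_mul_left q hk)
  have hGne : G ≠ 0 := by
    intro h
    have h2 := hGdvd 1 h1n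
    rw [h, zero_dvd_iff] at h2
    exact absurd h2 (hCpos 1 (by omega)).ne'
  have hval : ∀ k : ℕ, k ≤ n →
      (p - 1) * padicValNat p (Nat.choose (q * n) (q * k)) =
        (Nat.digits p (q * k)).sum + (Nat.digits p (q * n - q * k)).sum -
          (Nat.digits p (q * n)).sum := fun k hk =>
    sub_one_mul_padicValNat_choose_eq_sub_sum_digits (Nat.mul_le_mul_left q hk)
  by_cases hcase : (Nat.digits p (q * n)).sum = q
  · rw [if_pos hcase]
    -- every element is divisible by p
    have hdvdall : ∀ k ∈ Finset.Ioo 0 n, p ∣ Nat.choose (q * n) (q * k) := by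
      intro k hk
      rw [Finset.mem_Ioo] at hk
      have h1 := hval k hk.2.le
      have hqk : q ≤ (Nat.digits p (q * k)).sum :=
        hSge _ (Nat.mul_pos hq hk.1) ⟨k, rfl⟩
      have hqnk : q ≤ (Nat.digits p (q * n - q * k)).sum := by
        refine hSge _ ?_ (Nat.dvd_sub ⟨n, rfl⟩ ⟨k, rfl⟩)
        have : q * k < q * n := (Nat.mul_lt_mul_left hq).mpr hk.2
        omega
      rw [hcase] at h1
      have hv1 : 1 ≤ padicValNat p (Nat.choose (q * n) (q * k)) := by
        rcases Nat.eq_zero_or_pos (padicValNat p (Nat.choose (q * n) (q * k))) with h0 | h0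
        · rw [h0, Nat.mul_zero] at h1; omega
        · exact h0
      have := (padicValNat_dvd_iff_le (hCpos k hk.2.le).ne').mpr hv1
      simpa using this
    have hpG : p ∣ G := Finset.dvd_gcd hdvdall
    -- find k0 with valuation exactly one
    have hmp : p ≤ q * n := by
      by_contra h
      push_neg at h
      rw [Stmt18.Ssingle hp2 h] at hcase
      have : n = 1 := by
        have := Nat.eq_of_mul_eq_mul_left hq (hcase.trans (Nat.mul_one q).symm)
        omega
      omega
    obtain ⟨a, b, hab, hbpos, hSa, hSb⟩ := Stmt18.splitB hp hmp (by omega)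
    rw [hcase] at hSa
    have hqa : q ∣ a := keyb a (hSa ▸ dvd_refl q)
    have hapos : 0 < a := by
      rcases Nat.eq_zero_or_pos a with rfl | h
      · simp at hSa; omega
      · exact h
    obtain ⟨k0, rfl⟩ := hqa
    have hk0 : k0 ∈ Finset.Ioo 0 n := by
      rw [Finset.mem_Ioo]
      constructor
      · exact Nat.pos_of_ne_zero (by rintro rfl; simp at hapos)
      · have : q * k0 < q * n := by omega
        exact lt_of_mul_lt_mul_left this (by omega)
    have hk0n : k0 ≤ n := (Finset.mem_Ioo.mp hk0).2.le
    have hv0 : padicValNat p (Nat.choose (q * n) (q * k0)) = 1 := by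
      have h1 := hval k0 hk0n
      have hb : q * n - q * k0 = b := by omega
      rw [hcase, hSa, hb, hSb] at h1
      have h2 : (p - 1) * padicValNat p (Nat.choose (q * n) (q * k0)) = (p - 1) * 1 := by
        omega
      exact Nat.eq_of_mul_eq_mul_left (by omega) h2
    have hle : padicValNat p G ≤ 1 := by
      have hd : p ^ padicValNat p G ∣ Nat.choose (q * n) (q * k0) :=
        pow_padicValNat_dvd.trans (hGdvd k0 hk0)
      have := (padicValNat_dvd_iff_le (hCpos k0 hk0n).ne').mp hd
      omega
    have hge : 1 ≤ padicValNat p G := by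
      have := (padicValNat_dvd_iff_le hGne).mp (show p ^ 1 ∣ G by rwa [pow_one])
      omega
    omega
  · rw [if_neg hcase]
    have hSqn : q ≤ (Nat.digits p (q * n)).sum :=
      hSge _ (Nat.mul_pos hq (by omega)) ⟨n, rfl⟩
    obtain ⟨a, hale, hSa, hSrest⟩ := Stmt18.splitA hp2 (q * n) q hSqn
    have hqa : q ∣ a := keyb a (hSa ▸ dvd_refl q)
    have hapos : 0 < a := by
      rcases Nat.eq_zero_or_pos a with rfl | h
      · simp at hSa; omega
      · exact h
    have hrestpos : 0 < (Nat.digits p (q * n - a)).sum := by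
      rw [hSrest]
      have h2q : 2 * q ≤ (Nat.digits p (q * n)).sum := by
        obtain ⟨c, hc⟩ := keyf (q * n) ⟨n, rfl⟩
        have hc1 : 1 ≤ c := by
          rcases Nat.eq_zero_or_pos c with rfl | h
          · omega
          · exact h
        have hc2 : c ≠ 1 := by
          intro h
          rw [h, mul_one] at hc
          exact hcase hc
        have : 2 ≤ c := by omega
        calc 2 * q = q * 2 := by ring
          _ ≤ q * c := Nat.mul_le_mul_left q this
          _ = (Nat.digits p (q * n)).sum := hc.symm
      omega
    have haltn : a < q * n := by
      rcases eq_or_lt_of_le hale with h | h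
      · rw [h] at hrestpos; simp at hrestpos
      · exact h
    obtain ⟨k0, rfl⟩ := hqa
    have hk0 : k0 ∈ Finset.Ioo 0 n := by
      rw [Finset.mem_Ioo]
      exact ⟨Nat.pos_of_ne_zero (by rintro rfl; simp at hapos),
        lt_of_mul_lt_mul_left haltn (by omega)⟩
    have hk0n : k0 ≤ n := (Finset.mem_Ioo.mp hk0).2.le
    have hv0 : padicValNat p (Nat.choose (q * n) (q * k0)) = 0 := by
      have h1 := hval k0 hk0n
      rw [hSa, hSrest] at h1
      have h2 : (Nat.digits p (q * k0)).sum = q := hSa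
      have : (p - 1) * padicValNat p (Nat.choose (q * n) (q * k0)) = 0 := by omega
      rcases Nat.mul_eq_zero.mp this with h | h
      · omega
      · exact h
    have hnd : ¬ p ∣ Nat.choose (q * n) (q * k0) := by
      intro h
      have := (padicValNat_dvd_iff_le (hCpos k0 hk0n).ne').mp
        (show p ^ 1 ∣ _ by rwa [pow_one])
      omega
    exact padicValNat.eq_zero_of_not_dvd fun h => hnd (h.trans (hGdvd k0 hk0))
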